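/- Let n ≥ 3, let t ∈ ℂ with t ≠ 0 and t ≠ 1, and let a, c ∈ ℂ with a² − t·c² ≠ 0. For 1 ≤ i ≤ n−1, let S_i ∈ M_n(ℂ) be the matrix with (i,i+1)-entry t, (i+1,i)-entry 1, (k,k)-entry 1 for every k ∉ {i,i+1}, and all other entries 0, and let N_i ∈ M_n(ℂ) be the matrix with (i,i)- and (i+1,i+1)-entries a, (i,i+1)-entry c·t, (i+1,i)-entry c, (k,k)-entry 1 for every k ∉ {i,i+1}, and all other entries 0. Then the only ℂ-subspaces W of ℂⁿ satisfying S_i·W ⊆ W and N_i·W ⊆ W for all 1 ≤ i ≤ n−1 are {0} and ℂⁿ; that is, the extension ρ'_S of the standard representation to the singular braid group SB_n is irreducible. -/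

import Mathlib

open Matrix

/-- The image of the braid generator under the standard (Tong–Yang–Ma)
representation (0-indexed `i`): `(i,i+1)`-entry `t`, `(i+1,i)`-entry `1`,
diagonal entries `1` outside `{i, i+1}`, all other entries `0`. -/
def stdS (n : ℕ) {R : Type*} [CommRing R] (t : R) (i : ℕ) : Matrix (Fin n) (Fin n) R :=
  Matrix.of fun k l =>
    if (k : ℕ) = i ∧ (l : ℕ) = i + 1 then t
    else if (k : ℕ) = i + 1 ∧ (l : ℕ) = i then 1
    else if k = l ∧ (k : ℕ) ≠ i ∧ (k : ℕ) ≠ i + 1 then 1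
    else 0

/-- The image of the singular generator (0-indexed `i`): `(i,i)`- and
`(i+1,i+1)`-entries `a`, `(i,i+1)`-entry `c*t`, `(i+1,i)`-entry `c`,
diagonal entries `1` outside `{i, i+1}`, all other entries `0`. -/
def stdN (n : ℕ) {R : Type*} [CommRing R] (a c t : R) (i : ℕ) : Matrix (Fin n) (Fin n) R :=
  Matrix.of fun k l =>
    if (k : ℕ) = i ∧ (l : ℕ) = i then a
    else if (k : ℕ) = i + 1 ∧ (l : ℕ) = i + 1 then a
    else if (k : ℕ) = i ∧ (l : ℕ) = i + 1 then c * t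
    else if (k : ℕ) = i + 1 ∧ (l : ℕ) = i then c
    else if k = l then 1
    else 0

lemma stdS_mulVec (n : ℕ) (t : ℂ) (i : ℕ) (h : i + 1 < n) (w : Fin n → ℂ) :
    (stdS n t i).mulVec w = fun k : Fin n =>
      if (k : ℕ) = i then t * w ⟨i + 1, h⟩
      else if (k : ℕ) = i + 1 then w ⟨i, by omega⟩
      else w k := by
  funext k
  simp only [mulVec, dotProduct, stdS, of_apply]
  by_cases hk : (k : ℕ) = i
  · rw [if_pos hk, Finset.sum_eq_single (⟨i + 1, h⟩ : Fin n)]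
    · simp [hk]
    · intro b _ hb
      have hb' : (b : ℕ) ≠ i + 1 := fun hh => hb (Fin.ext hh)
      split_ifs with h1 h2 h3 <;> simp_all <;> omega
    · simp
  · by_cases hk2 : (k : ℕ) = i + 1
    · rw [if_neg hk, if_pos hk2, Finset.sum_eq_single (⟨i, by omega⟩ : Fin n)]
      · simp [hk2, hk]
      · intro b _ hb
        have hb' : (b : ℕ) ≠ i := fun hh => hb (Fin.ext hh)
        split_ifs with h1 h2 h3 <;> simp_all <;> omega
      · simp
    · rw [if_neg hk, if_neg hk2, Finset.sum_eq_single k]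
      · simp [hk, hk2]
      · intro b _ hb
        split_ifs with h1 h2 h3
        · exact absurd h1.1 hk
        · exact absurd h2.1 hk2
        · exact absurd h3.1.symm hb
        · ring
      · simp

lemma stdS_mulVec_sq (n : ℕ) (t : ℂ) (i : ℕ) (h : i + 1 < n) (w : Fin n → ℂ) :
    (stdS n t i).mulVec ((stdS n t i).mulVec w) = fun k : Fin n =>
      if (k : ℕ) = i ∨ (k : ℕ) = i + 1 then t * w k else w k := by
  rw [stdS_mulVec n t i h, stdS_mulVec n t i h]
  funext k
  by_cases hk : (k : ℕ) = i
  · have hkk : k = ⟨i, Nat.lt_of_succ_lt h⟩ := Fin.ext hk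
    subst hkk
    simp
  · by_cases hk2 : (k : ℕ) = i + 1
    · have hkk : k = ⟨i + 1, h⟩ := Fin.ext hk2
      subst hkk
      simp
    · simp [hk, hk2]

/-- standard basis vector -/
def eb (n : ℕ) (j : Fin n) : Fin n → ℂ := fun k => if k = j then 1 else 0

lemma stdS_mulVec_eb_left (n : ℕ) (t : ℂ) (i : ℕ) (hi : i + 1 < n) :
    (stdS n t i).mulVec (eb n ⟨i, Nat.lt_of_succ_lt hi⟩) = eb n ⟨i + 1, hi⟩ := by
  rw [stdS_mulVec n t i hi]
  funext k
  simp only [eb, Fin.ext_iff]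
  split_ifs <;> first | rfl | omega | ring1 | simp

lemma stdS_mulVec_eb_right (n : ℕ) (t : ℂ) (i : ℕ) (hi : i + 1 < n) :
    (stdS n t i).mulVec (eb n ⟨i + 1, hi⟩) = t • eb n ⟨i, Nat.lt_of_succ_lt hi⟩ := by
  rw [stdS_mulVec n t i hi]
  funext k
  simp only [eb, Pi.smul_apply, smul_eq_mul, Fin.ext_iff]
  split_ifs <;> first | rfl | omega | ring1 | simp

/-- For `t ≠ 0, 1`, every extension of the standard representation of `B_n` to the
singular braid group `SB_n` (`n ≥ 3`) is irreducible: the only invariant subspaces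
of `ℂⁿ` are `⊥` and `⊤`.  (0-indexed generators `0 ≤ i < n - 1`.) -/
theorem irreducible_extension_of_t_ne_one (n : ℕ) (hn : 3 ≤ n)
    (t : ℂ) (ht0 : t ≠ 0) (ht1 : t ≠ 1) (a c : ℂ) (hac : a ^ 2 - t * c ^ 2 ≠ 0)
    (W : Submodule ℂ (Fin n → ℂ))
    (hS : ∀ i, i < n - 1 → ∀ w ∈ W, (stdS n t i).mulVec w ∈ W)
    (hN : ∀ i, i < n - 1 → ∀ w ∈ W, (stdN n a c t i).mulVec w ∈ W) :
    W = ⊥ ∨ W = ⊤ := by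
  rcases eq_or_ne W ⊥ with hW | hW
  · exact Or.inl hW
  right
  obtain ⟨w, hwW, hw0⟩ := Submodule.ne_bot_iff W |>.mp hW
  have ht1' : t - 1 ≠ 0 := sub_ne_zero.mpr ht1
  -- window projections stay in W
  have hP : ∀ i : ℕ, i + 1 < n → ∀ v ∈ W,
      (fun k : Fin n => if (k : ℕ) = i ∨ (k : ℕ) = i + 1 then v k else 0) ∈ W := by
    intro i hi v hv
    have hiw : i < n - 1 := by omega
    have h2 := hS i hiw _ (hS i hiw v hv)
    rw [stdS_mulVec_sq n t i hi v] at h2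
    have h3 : (fun k : Fin n => if (k : ℕ) = i ∨ (k : ℕ) = i + 1 then v k else 0)
        = (t - 1)⁻¹ • ((fun k : Fin n =>
            if (k : ℕ) = i ∨ (k : ℕ) = i + 1 then t * v k else v k) - v) := by
      funext k
      simp only [Pi.smul_apply, Pi.sub_apply, smul_eq_mul]
      split_ifs with h
      · field_simp
      · simp
    rw [h3]
    exact Submodule.smul_mem _ _ (Submodule.sub_mem _ h2 hv)
  -- extract a single basis direction
  obtain ⟨j, hj⟩ : ∃ j : Fin n, w j ≠ 0 := by
    by_contra hc
    push_neg at hc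
    exact hw0 (funext fun k => hc k)
  have hsingle : (fun k : Fin n => if k = j then w j else 0) ∈ W := by
    by_cases hj0 : (j : ℕ) = 0
    · have h1 := hP 0 (by omega) w hwW
      have h2 := hP 1 (by omega) _ h1
      have he : (fun k : Fin n => if k = j then w j else 0)
          = (fun k : Fin n => if (k : ℕ) = 0 ∨ (k : ℕ) = 0 + 1 then w k else 0)
            - (fun k : Fin n => if (k : ℕ) = 1 ∨ (k : ℕ) = 1 + 1 then
                (if (k : ℕ) = 0 ∨ (k : ℕ) = 0 + 1 then w k else 0) else 0) := by
        funext k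
        simp only [Pi.sub_apply, Fin.ext_iff, hj0]
        split_ifs <;>
          first | omega |
            (simp only [sub_zero, sub_self]; all_goals first | rfl | exact congrArg w (Fin.ext (by omega)))
      rw [he]
      exact Submodule.sub_mem _ h1 h2
    · by_cases hjn : (j : ℕ) = n - 1
      · have h1 := hP (n - 2) (by omega) w hwW
        have h2 := hP (n - 3) (by omega) _ h1
        have he : (fun k : Fin n => if k = j then w j else 0)
            = (fun k : Fin n => if (k : ℕ) = n - 2 ∨ (k : ℕ) = n - 2 + 1 then w k else 0)
              - (fun k : Fin n => if (k : ℕ) = n - 3 ∨ (k : ℕ) = n - 3 + 1 then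
                  (if (k : ℕ) = n - 2 ∨ (k : ℕ) = n - 2 + 1 then w k else 0) else 0) := by
          funext k
          simp only [Pi.sub_apply, Fin.ext_iff, hjn]
          split_ifs <;>
            first | omega |
              (simp only [sub_zero, sub_self]; all_goals first | rfl | exact congrArg w (Fin.ext (by omega)))
        rw [he]
        exact Submodule.sub_mem _ h1 h2
      · -- middle case: 1 ≤ j ≤ n - 2
        have hj1 : 1 ≤ (j : ℕ) := by omega
        have hj2 : (j : ℕ) + 1 < n := by have := j.isLt; omega
        have h1 := hP (j : ℕ) hj2 w hwW
        have h2 := hP ((j : ℕ) - 1) (by omega) _ h1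
        have he : (fun k : Fin n => if k = j then w j else 0)
            = fun k : Fin n => if (k : ℕ) = (j : ℕ) - 1 ∨ (k : ℕ) = (j : ℕ) - 1 + 1 then
                (if (k : ℕ) = (j : ℕ) ∨ (k : ℕ) = (j : ℕ) + 1 then w k else 0) else 0 := by
          funext k
          simp only [Fin.ext_iff]
          split_ifs <;>
            first | omega | ring1 | (exact congrArg w (Fin.ext (by omega))) | simp
        rw [he]
        exact h2
  have hej : eb n j ∈ W := by
    have : eb n j = (w j)⁻¹ • fun k : Fin n => if k = j then w j else 0 := by
      funext k
      simp only [eb, Pi.smul_apply, smul_eq_mul]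
      split_ifs
      · exact (inv_mul_cancel₀ hj).symm
      · simp
    rw [this]
    exact Submodule.smul_mem _ _ hsingle
  -- propagate basis vectors
  have hup : ∀ i : ℕ, ∀ hi : i + 1 < n,
      eb n ⟨i, Nat.lt_of_succ_lt hi⟩ ∈ W → eb n ⟨i + 1, hi⟩ ∈ W := by
    intro i hi h
    have := hS i (by omega) _ h
    rwa [stdS_mulVec_eb_left n t i hi] at this
  have hdown : ∀ i : ℕ, ∀ hi : i + 1 < n,
      eb n ⟨i + 1, hi⟩ ∈ W → eb n ⟨i, Nat.lt_of_succ_lt hi⟩ ∈ W := by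
    intro i hi h
    have h2 := hS i (by omega) _ h
    rw [stdS_mulVec_eb_right n t i hi] at h2
    have : eb n ⟨i, Nat.lt_of_succ_lt hi⟩ = t⁻¹ • (t • eb n ⟨i, Nat.lt_of_succ_lt hi⟩) := by
      rw [smul_smul, inv_mul_cancel₀ ht0, one_smul]
    rw [this]
    exact Submodule.smul_mem _ _ h2
  have hdownall : ∀ m : ℕ, ∀ hm : m < n, eb n ⟨m, hm⟩ ∈ W → eb n ⟨0, by omega⟩ ∈ W := by
    intro m
    induction m with
    | zero => intro hm h; exact h
    | succ m ih => intro hm h; exact ih (by omega) (hdown m hm h)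
  have h0 : eb n ⟨0, by omega⟩ ∈ W := hdownall (j : ℕ) j.isLt (by simpa using hej)
  have hall : ∀ m : ℕ, ∀ hm : m < n, eb n ⟨m, hm⟩ ∈ W := by
    intro m
    induction m with
    | zero => intro hm; exact h0
    | succ m ih => intro hm; exact hup m hm (ih (by omega))
  rw [eq_top_iff]
  intro v _
  have hv : v = ∑ k : Fin n, v k • eb n k := by
    funext l
    rw [Finset.sum_apply]
    simp only [eb, Pi.smul_apply, smul_eq_mul, mul_ite, mul_one, mul_zero]
    rw [Finset.sum_ite_eq Finset.univ l v]
    simp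
  rw [hv]
  exact Submodule.sum_mem _ fun k _ => Submodule.smul_mem _ _ (by simpa using hall (k : ℕ) k.isLt)
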